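/- Let G₁ and G₂ be torsion-free groups, G = G₁ * G₂, and n a positive integer. Then G₁ ∩ Gⁿ = G₁ⁿ, where Gⁿ denotes the subgroup generated by all n-th powers of elements of G, and G₁ⁿ the subgroup of G₁ generated by n-th powers of elements of G₁. -/

import Mathlib

open scoped Monoid.Coprod
/-- A monoid is torsion-free if its non-identity elements are not of finite order
(the definition removed from Mathlib, restored with its old meaning). -/
def Monoid.IsTorsionFree (G : Type*) [Monoid G] : Prop :=
  ∀ g : G, g ≠ 1 → ¬IsOfFinOrder g

/-- For a group `K`, the subgroup generated by all `n`-th powers of elements of `K`. -/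
def powSubgroup (K : Type*) [Group K] (n : ℕ) : Subgroup K :=
  Subgroup.closure {x : K | ∃ k : K, x = k ^ n}

lemma powSubgroup_map_le {K L : Type*} [Group K] [Group L] (f : K →* L) (n : ℕ) :
    (powSubgroup K n).map f ≤ powSubgroup L n := by
  rw [powSubgroup, MonoidHom.map_closure]
  apply Subgroup.closure_mono
  rintro _ ⟨_, ⟨k, rfl⟩, rfl⟩
  exact ⟨f k, map_pow f k n⟩

/-- If `G₁`, `G₂` are torsion-free and `G = G₁ ∗ G₂`, then `G₁ ∩ Gⁿ = G₁ⁿ`. -/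
theorem stmt_1 {G₁ G₂ : Type*} [Group G₁] [Group G₂]
    (h₁ : Monoid.IsTorsionFree G₁) (h₂ : Monoid.IsTorsionFree G₂)
    (n : ℕ) (hn : 0 < n) :
    (Monoid.Coprod.inl : G₁ →* G₁ ∗ G₂).range ⊓ powSubgroup (G₁ ∗ G₂) n
      = (powSubgroup G₁ n).map (Monoid.Coprod.inl : G₁ →* G₁ ∗ G₂) := by
  apply le_antisymm
  · rintro x ⟨⟨g, rfl⟩, hx⟩
    refine ⟨g, ?_, rfl⟩
    have : (Monoid.Coprod.fst : G₁ ∗ G₂ →* G₁) (Monoid.Coprod.inl g)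
        ∈ (powSubgroup (G₁ ∗ G₂) n).map (Monoid.Coprod.fst : G₁ ∗ G₂ →* G₁) :=
      ⟨_, hx, rfl⟩
    simpa using powSubgroup_map_le _ n this
  · refine le_inf ?_ (powSubgroup_map_le _ n)
    exact (Subgroup.map_le_range _ _)
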